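/- Let K be a field with n! invertible and let h_k denote the k-th complete homogeneous symmetric polynomial. Then for each k = 1,...,n, the polynomial h_k(x_k, x_{k+1}, ..., x_n) lies in the Hilbert ideal of K[x_1,...,x_n] generated by the S_n-invariants of positive degree (where S_n permutes x_1,...,x_n). -/

import Mathlib

open MvPolynomial

/-- `f ∈ K[x_1, …, x_n]` is a symmetric polynomial (invariant under `S_n` permuting the
variables). -/
def IsSymmPoly {K : Type*} [CommRing K] {n : ℕ} (f : MvPolynomial (Fin n) K) : Prop :=
  ∀ σ : Equiv.Perm (Fin n), rename σ f = f

/-- The complete homogeneous symmetric polynomial `h_k(x_k, x_{k+1}, …, x_n)` of the last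
`n − k + 1` variables (with 1-based indexing): the sum of all monomials of degree `k` in
the variables `x_j` with `j ≥ k`. -/
noncomputable def hLast (K : Type*) [CommRing K] (n k : ℕ) : MvPolynomial (Fin n) K :=
  ∑ M ∈ (Finset.univ.filter (fun j : Fin n => k ≤ (j : ℕ) + 1)).sym k,
    ((M : Multiset (Fin n)).map X).prod

/-- `h_k` restricted to a set `s` of variables. -/
noncomputable def hSet (K : Type*) [CommRing K] {n : ℕ} (s : Finset (Fin n)) (k : ℕ) :
    MvPolynomial (Fin n) K :=
  ∑ M ∈ s.sym k, ((M : Multiset (Fin n)).map X).prod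

lemma multiset_prod_homogeneous {K : Type*} [CommRing K] {n : ℕ} (M : Multiset (Fin n)) :
    ((M.map X).prod : MvPolynomial (Fin n) K).IsHomogeneous (Multiset.card M) := by
  induction M using Multiset.induction with
  | empty => simpa using isHomogeneous_one (Fin n) K
  | cons a M ih =>
      rw [Multiset.map_cons, Multiset.prod_cons, Multiset.card_cons, add_comm]
      exact (isHomogeneous_X K a).mul ih

lemma hSet_univ_homogeneous {K : Type*} [CommRing K] {n k : ℕ} :
    (hSet K (Finset.univ : Finset (Fin n)) k).IsHomogeneous k := by
  apply IsHomogeneous.sum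
  rintro ⟨m, hm⟩ _
  exact hm ▸ multiset_prod_homogeneous m

lemma hSet_univ_symm {K : Type*} [CommRing K] {n k : ℕ} :
    IsSymmPoly (hSet K (Finset.univ : Finset (Fin n)) k) := by
  intro σ
  have h1 : hSet K (Finset.univ : Finset (Fin n)) k = hsymm (Fin n) K k := by
    rw [hSet, hsymm, Finset.sym_univ]
    rfl
  rw [h1]
  exact rename_hsymm _ _ k σ

/-- The key recurrence: `h_{k+1}(insert a s) = h_{k+1}(s) + X a * h_k(insert a s)`. -/
lemma hSet_insert {K : Type*} [CommRing K] {n : ℕ} {a : Fin n} {s : Finset (Fin n)}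
    (ha : a ∉ s) (k : ℕ) :
    hSet K (insert a s) (k + 1) = hSet K s (k + 1) + X a * hSet K (insert a s) k := by
  classical
  have hsplit : (insert a s).sym (k + 1) =
      s.sym (k + 1) ∪ ((insert a s).sym k).image (Sym.cons a) := by
    ext M
    simp only [Finset.mem_union, Finset.mem_image, Finset.mem_sym_iff, Finset.mem_insert]
    constructor
    · intro h
      by_cases hma : a ∈ M
      · right
        obtain ⟨M', rfl⟩ := Sym.exists_cons_of_mem hma
        refine ⟨M', fun b hb => h b (Sym.mem_cons_of_mem hb), rfl⟩
      · left
        intro b hb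
        rcases h b hb with h' | h'
        · exact absurd (h' ▸ hb) hma
        · exact h'
    · rintro (h | ⟨M', hM', rfl⟩)
      · exact fun b hb => Or.inr (h b hb)
      · intro b hb
        rcases Sym.mem_cons.mp hb with rfl | hb'
        · exact Or.inl rfl
        · exact hM' b hb'
  have hdisj : Disjoint (s.sym (k + 1)) (((insert a s).sym k).image (Sym.cons a)) := by
    rw [Finset.disjoint_right]
    rintro M hM hM'
    obtain ⟨M', _, rfl⟩ := Finset.mem_image.mp hM
    exact ha (Finset.mem_sym_iff.mp hM' a (Sym.mem_cons_self a M'))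
  rw [hSet, hsplit, Finset.sum_union hdisj, Finset.sum_image
    (fun M _ M' _ h => (Sym.cons_inj_right a M M').mp h)]
  congr 1
  rw [hSet, Finset.mul_sum]
  apply Finset.sum_congr rfl
  intro M _
  rw [Sym.coe_cons, Multiset.map_cons, Multiset.prod_cons]

lemma hSet_mem_span {K : Type*} [Field K] {n : ℕ} :
    ∀ c k, c < k → ∀ s : Finset (Fin n), (Finset.univ \ s).card = c →
    hSet K s k ∈ Ideal.span {f : MvPolynomial (Fin n) K |
      ∃ d : ℕ, 0 < d ∧ f.IsHomogeneous d ∧ IsSymmPoly f} := by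
  classical
  intro c
  induction c with
  | zero =>
      intro k hk s hs
      have hsu : s = Finset.univ := by
        have := Finset.card_eq_zero.mp hs
        have hsub : (Finset.univ : Finset (Fin n)) ⊆ s := by
          intro x _
          by_contra hx
          exact absurd (Finset.eq_empty_iff_forall_notMem.mp this x) fun h =>
            h (Finset.mem_sdiff.mpr ⟨Finset.mem_univ x, hx⟩)
        exact Finset.eq_univ_of_forall fun x => hsub (Finset.mem_univ x)
      subst hsu
      exact Ideal.subset_span ⟨k, hk, hSet_univ_homogeneous, hSet_univ_symm⟩
  | succ c ih =>
      intro k hk s hs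
      have hne : (Finset.univ \ s).Nonempty := by
        rw [← Finset.card_pos, hs]; omega
      obtain ⟨a, ha⟩ := hne
      have has : a ∉ s := (Finset.mem_sdiff.mp ha).2
      have hcard : (Finset.univ \ insert a s).card = c := by
        rw [Finset.sdiff_insert, Finset.card_erase_of_mem ha, hs]
        omega
      obtain ⟨k', rfl⟩ : ∃ k', k = k' + 1 := ⟨k - 1, by omega⟩
      have heq : hSet K s (k' + 1) =
          hSet K (insert a s) (k' + 1) - X a * hSet K (insert a s) k' := by
        rw [hSet_insert has]; ring
      rw [heq]
      exact Ideal.sub_mem _ (ih (k' + 1) (by omega) _ hcard)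
        (Ideal.mul_mem_left _ _ (ih k' (by omega) _ hcard))

/-- If `n!` is invertible in the field `K`, then for each `k = 1, …, n` the polynomial
`h_k(x_k, …, x_n)` lies in the Hilbert ideal of `K[x_1, …, x_n]`, i.e. the ideal
generated by the homogeneous `S_n`-invariants of positive degree. -/
theorem hk_mem_hilbert_ideal
    (K : Type*) [Field K] (n : ℕ) (hn : IsUnit (n.factorial : K))
    (k : ℕ) (hk1 : 1 ≤ k) (hkn : k ≤ n) :
    hLast K n k ∈ Ideal.span {f : MvPolynomial (Fin n) K |
      ∃ d : ℕ, 0 < d ∧ f.IsHomogeneous d ∧ IsSymmPoly f} := by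
  classical
  have h1 : hLast K n k = hSet K (Finset.univ.filter (fun j : Fin n => k ≤ (j : ℕ) + 1)) k :=
    rfl
  rw [h1]
  apply hSet_mem_span _ k _ _ rfl
  calc (Finset.univ \ Finset.univ.filter (fun j : Fin n => k ≤ (j : ℕ) + 1)).card
      ≤ (Finset.range (k - 1)).card := by
        refine Finset.card_le_card_of_injOn (fun j => (j : ℕ)) ?_ ?_
        · intro j hj
          simp only [Finset.mem_coe, Finset.mem_sdiff, Finset.mem_filter, Finset.mem_univ, true_and,
            not_le] at hj
          simp only [Finset.mem_coe, Finset.mem_range]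
          omega
        · intro x _ y _ h
          exact Fin.ext h
    _ < k := by rw [Finset.card_range]; omega
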